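/- Suppose there exist θ > 0 and a measurable ω : ℝ≥0 → ℝ≥0 with lim_{x→∞} ω(x)/x = ∞ such that ∫ exp(θ ω(η(0))) dν_φ < ∞ for the probability measure ν_φ{k} = φ^k/(Z(φ)g(k)!). Then the power series Z(ψ) = Σ_k ψ^k/g(k)! converges for every ψ > 0, i.e. Z has infinite radius of convergence. -/
import Mathlib


theorem stmt_8 (g : ℕ → ℝ) (φ θ : ℝ) (ω : ℝ → ℝ)
    (hg : ∀ k : ℕ, 1 ≤ k → 0 < g k) (hφ : 0 < φ) (hθ : 0 < θ)
    (gfact : ℕ → ℝ)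
    (hgfact : ∀ k, gfact k = ∏ i ∈ Finset.range k, g (i + 1))
    (hφsum : Summable (fun k : ℕ => φ ^ k / gfact k))
    (Z : ℝ → ℝ) (hZ : ∀ ψ, Z ψ = ∑' k : ℕ, ψ ^ k / gfact k)
    (ν : ℕ → ℝ) (hν : ∀ k, ν k = φ ^ k / (Z φ * gfact k))
    (hωnonneg : ∀ x, 0 ≤ x → 0 ≤ ω x)
    (hsuper : Filter.Tendsto (fun x => ω x / x) Filter.atTop Filter.atTop)
    (hmom : Summable (fun k : ℕ => Real.exp (θ * ω k) * ν k)) :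
    ∀ ψ : ℝ, 0 < ψ → Summable (fun k : ℕ => ψ ^ k / gfact k) := by
  intro ψ hψ
  have hgf : ∀ k, 0 < gfact k := by
    intro k
    rw [hgfact]
    exact Finset.prod_pos (fun i _ => hg (i + 1) (Nat.le_add_left 1 i))
  have hZpos : 0 < Z φ := by
    rw [hZ]
    have h0 : (0 : ℝ) < φ ^ 0 / gfact 0 := by
      have := hgf 0
      positivity
    exact lt_of_lt_of_le h0 (Summable.le_tsum hφsum 0
      (fun j _ => div_nonneg (pow_nonneg hφ.le j) (hgf j).le))
  set L := Real.log (ψ / φ) with hL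
  have htend : Filter.Tendsto (fun k : ℕ => ω k / k) Filter.atTop Filter.atTop :=
    hsuper.comp tendsto_natCast_atTop_atTop
  have hev : ∀ᶠ k : ℕ in Filter.atTop, L / θ ≤ ω k / k :=
    htend.eventually_ge_atTop _
  have hνnn : ∀ k, 0 ≤ ν k := by
    intro k
    rw [hν]
    exact div_nonneg (pow_nonneg hφ.le k) (mul_nonneg hZpos.le (hgf k).le)
  have hev2 : ∀ᶠ k : ℕ in Filter.atTop,
      ‖ψ ^ k / gfact k‖ ≤ Z φ * ‖Real.exp (θ * ω k) * ν k‖ := by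
    filter_upwards [hev, Filter.eventually_gt_atTop 0] with k hk hk0
    have hkpos : (0 : ℝ) < (k : ℝ) := Nat.cast_pos.mpr hk0
    have h1 : L * k ≤ ω k * θ := (div_le_div_iff₀ hθ hkpos).mp hk
    have hratio : (0 : ℝ) < ψ / φ := div_pos hψ hφ
    have h2 : (ψ / φ) ^ k ≤ Real.exp (θ * ω k) := by
      have : (ψ / φ) ^ k = Real.exp ((k : ℝ) * L) := by
        rw [Real.exp_nat_mul, Real.exp_log hratio]
      rw [this]
      apply Real.exp_le_exp.mpr
      nlinarith
    have hlhs : ψ ^ k / gfact k = (ψ / φ) ^ k * (φ ^ k / gfact k) := by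
      rw [div_pow]
      field_simp
    have hν' : Z φ * ν k = φ ^ k / gfact k := by
      rw [hν, ← mul_div_assoc, mul_div_mul_left _ _ hZpos.ne']
    have hrhs : Z φ * (Real.exp (θ * ω k) * ν k)
        = Real.exp (θ * ω k) * (φ ^ k / gfact k) := by
      rw [← hν']; ring
    rw [Real.norm_of_nonneg (div_nonneg (pow_nonneg hψ.le k) (hgf k).le),
      Real.norm_of_nonneg (mul_nonneg (Real.exp_pos _).le (hνnn k)), hrhs, hlhs]
    have hpos : 0 ≤ φ ^ k / gfact k := div_nonneg (pow_nonneg hφ.le k) (hgf k).le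
    exact mul_le_mul_of_nonneg_right h2 hpos
  have hO : (fun k : ℕ => ψ ^ k / gfact k) =O[Filter.cofinite]
      fun k : ℕ => Real.exp (θ * ω k) * ν k := by
    rw [Nat.cofinite_eq_atTop]
    exact Asymptotics.isBigO_iff.mpr ⟨Z φ, hev2⟩
  exact summable_of_isBigO hmom hO
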